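/- arXiv:1307.4463 — 4 statements merged into one kernel-verified Lean document; each statement's English description precedes it below -/
import Mathlib

section
/- Lemma 4, part (1): the LT iterative-decoding error sequence is decreasing in the iteration number, i.e. for every l ≥ 0 one has 0 < p_l ≤ 1 and p_{l+1} ≤ p_l. -/
/-- Lemma 4, part (1): the LT iterative-decoding error sequence
`p 0 = 1`, `p (l+1) = exp (-(α * δ (1 - p l)))` satisfies `0 < p l ≤ 1` and is
decreasing in the iteration number `l`. -/
theorem lt_error_sequence_decreasing_in_iterations
    (K : ℕ) (hK : 1 ≤ K) (N k : ℝ) (hN : 0 < N) (hk : 0 < k)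
    (Δ : ℕ → ℝ) (hΔ : ∀ d ∈ Finset.Icc 1 K, 0 ≤ Δ d)
    (μ : ℝ) (hμ : μ = ∑ d ∈ Finset.Icc 1 K, (d : ℝ) * Δ d) (hμpos : 0 < μ)
    (α : ℝ) (hα : α = (N / k) * μ)
    (δ : ℝ → ℝ)
    (hδ : ∀ x : ℝ, δ x = (1 / μ) * ∑ d ∈ Finset.Icc 1 K, (d : ℝ) * Δ d * x ^ (d - 1))
    (p : ℕ → ℝ) (hp0 : p 0 = 1)
    (hp : ∀ l : ℕ, p (l + 1) = Real.exp (-(α * δ (1 - p l)))) :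
    ∀ l : ℕ, 0 < p l ∧ p l ≤ 1 ∧ p (l + 1) ≤ p l := by
  have hα0 : 0 ≤ α := by
    rw [hα]; positivity
  have hδmono : ∀ a b : ℝ, 0 ≤ a → a ≤ b → δ a ≤ δ b := by
    intro a b ha hab
    rw [hδ, hδ]
    apply mul_le_mul_of_nonneg_left _ (by positivity)
    apply Finset.sum_le_sum
    intro d hd
    have hΔd := hΔ d hd
    have hdpos : (0:ℝ) ≤ (d:ℝ) := by positivity
    exact mul_le_mul_of_nonneg_left (pow_le_pow_left₀ ha hab _)
      (by positivity)
  have hδ0 : ∀ x : ℝ, 0 ≤ x → 0 ≤ δ x := by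
    intro x hx
    rw [hδ]
    apply mul_nonneg (by positivity)
    apply Finset.sum_nonneg
    intro d hd
    have := hΔ d hd
    positivity
  -- bounds
  have hbound : ∀ l : ℕ, 0 < p l ∧ p l ≤ 1 := by
    intro l
    induction l with
    | zero => rw [hp0]; exact ⟨one_pos, le_refl 1⟩
    | succ n ih =>
      rw [hp]
      constructor
      · exact Real.exp_pos _
      · apply Real.exp_le_one_iff.mpr
        simp only [neg_nonpos]
        exact mul_nonneg hα0 (hδ0 _ (by linarith [ih.2]))
  have hdec : ∀ l : ℕ, p (l + 1) ≤ p l := by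
    intro l
    induction l with
    | zero =>
      rw [hp, hp0]
      apply Real.exp_le_one_iff.mpr
      simp only [neg_nonpos]
      exact mul_nonneg hα0 (hδ0 _ (by norm_num))
    | succ n ih =>
      rw [hp (n+1)]
      conv_rhs => rw [hp n]
      apply Real.exp_le_exp.mpr
      have h1 : p n ≤ 1 := (hbound n).2
      have hmono := hδmono (1 - p n) (1 - p (n + 1)) (by linarith) (by linarith)
      have := mul_le_mul_of_nonneg_left hmono hα0
      linarith
  intro l
  exact ⟨(hbound l).1, (hbound l).2, hdec l⟩
end

section
/- Comparison of the limits of the error recursion: if g, h : ℝ → ℝ are continuous and monotone nondecreasing on [0,1] with 0 ≤ g(x) ≤ h(x) for all x ∈ [0,1], and (p_l), (q_l) are defined by p_0 = q_0 = 1, p_l = exp(−g(1−p_{l−1})), q_l = exp(−h(1−q_{l−1})), then both sequences converge and lim_{l→∞} q_l ≤ lim_{l→∞} p_l; equivalently, the asymptotic recovery fraction 1 − lim p_l does not decrease when g is increased to h. -/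
/-- Comparison of the limits of the AND-OR-tree error recursion: if `g ≤ h` are
continuous, nonnegative and nondecreasing on `[0,1]`, then both error
sequences converge and the limit for `h` is at most the limit for `g`. -/
theorem lt_error_recursion_limit_comparison
    (g h : ℝ → ℝ)
    (hgcont : ContinuousOn g (Set.Icc (0 : ℝ) 1))
    (hhcont : ContinuousOn h (Set.Icc (0 : ℝ) 1))
    (hgmono : MonotoneOn g (Set.Icc (0 : ℝ) 1))
    (hhmono : MonotoneOn h (Set.Icc (0 : ℝ) 1))
    (hgh : ∀ x ∈ Set.Icc (0 : ℝ) 1, 0 ≤ g x ∧ g x ≤ h x)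
    (p q : ℕ → ℝ) (hp0 : p 0 = 1) (hq0 : q 0 = 1)
    (hp : ∀ l : ℕ, p (l + 1) = Real.exp (-(g (1 - p l))))
    (hq : ∀ l : ℕ, q (l + 1) = Real.exp (-(h (1 - q l)))) :
    ∃ P Q : ℝ, Filter.Tendsto p Filter.atTop (nhds P) ∧
      Filter.Tendsto q Filter.atTop (nhds Q) ∧ Q ≤ P := by
  have hg0 : ∀ x ∈ Set.Icc (0 : ℝ) 1, 0 ≤ g x := fun x hx => (hgh x hx).1
  have hh0 : ∀ x ∈ Set.Icc (0 : ℝ) 1, 0 ≤ h x := fun x hx =>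
    le_trans (hgh x hx).1 (hgh x hx).2
  -- membership lemmas
  have hpmem : ∀ l, p l ∈ Set.Icc (0 : ℝ) 1 := by
    intro l
    induction l with
    | zero => simp [hp0]
    | succ n ih =>
      have hx : (1 - p n) ∈ Set.Icc (0 : ℝ) 1 := by
        constructor <;> [linarith [ih.2]; linarith [ih.1]]
      rw [hp n]
      constructor
      · exact (Real.exp_pos _).le
      · exact Real.exp_le_one_iff.2 (by linarith [hg0 _ hx])
  have hqmem : ∀ l, q l ∈ Set.Icc (0 : ℝ) 1 := by
    intro l
    induction l with
    | zero => simp [hq0]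
    | succ n ih =>
      have hx : (1 - q n) ∈ Set.Icc (0 : ℝ) 1 := by
        constructor <;> [linarith [ih.2]; linarith [ih.1]]
      rw [hq n]
      constructor
      · exact (Real.exp_pos _).le
      · exact Real.exp_le_one_iff.2 (by linarith [hh0 _ hx])
  have hxmem : ∀ l, (1 - p l) ∈ Set.Icc (0 : ℝ) 1 := fun l =>
    ⟨by linarith [(hpmem l).2], by linarith [(hpmem l).1]⟩
  have hymem : ∀ l, (1 - q l) ∈ Set.Icc (0 : ℝ) 1 := fun l =>
    ⟨by linarith [(hqmem l).2], by linarith [(hqmem l).1]⟩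
  -- antitone
  have hpanti : ∀ l, p (l + 1) ≤ p l := by
    intro l
    induction l with
    | zero =>
      rw [hp 0]
      have h0 := hg0 _ (hxmem 0)
      nth_rewrite 2 [hp0]
      exact Real.exp_le_one_iff.2 (by linarith)
    | succ n ih =>
      rw [hp n, hp (n + 1)]
      apply Real.exp_le_exp.2
      apply neg_le_neg
      exact hgmono (hxmem n) (hxmem (n + 1)) (by linarith)
  have hqanti : ∀ l, q (l + 1) ≤ q l := by
    intro l
    induction l with
    | zero =>
      rw [hq 0]
      have h0 := hh0 _ (hymem 0)
      nth_rewrite 2 [hq0]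
      exact Real.exp_le_one_iff.2 (by linarith)
    | succ n ih =>
      rw [hq n, hq (n + 1)]
      apply Real.exp_le_exp.2
      apply neg_le_neg
      exact hhmono (hymem n) (hymem (n + 1)) (by linarith)
  have hpA : Antitone p := antitone_nat_of_succ_le hpanti
  have hqA : Antitone q := antitone_nat_of_succ_le hqanti
  -- comparison
  have hle : ∀ l, q l ≤ p l := by
    intro l
    induction l with
    | zero => rw [hp0, hq0]
    | succ n ih =>
      rw [hp n, hq n]
      apply Real.exp_le_exp.2
      apply neg_le_neg
      calc g (1 - p n) ≤ g (1 - q n) :=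
            hgmono (hxmem n) (hymem n) (by linarith)
        _ ≤ h (1 - q n) := (hgh _ (hymem n)).2
  have hpbdd : BddBelow (Set.range p) :=
    ⟨0, fun x ⟨l, hl⟩ => hl ▸ (hpmem l).1⟩
  have hqbdd : BddBelow (Set.range q) :=
    ⟨0, fun x ⟨l, hl⟩ => hl ▸ (hqmem l).1⟩
  refine ⟨⨅ l, p l, ⨅ l, q l, tendsto_atTop_ciInf hpA hpbdd,
    tendsto_atTop_ciInf hqA hqbdd, ?_⟩
  exact le_of_tendsto_of_tendsto (tendsto_atTop_ciInf hqA hqbdd)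
    (tendsto_atTop_ciInf hpA hpbdd) (Filter.Eventually.of_forall hle)
end

section
/- Lemma 4, part (2): the LT iterative-decoding error probability is decreasing in the number of time frames, i.e. for every iteration index l ≥ 0 one has p^{(i+1)}_l ≤ p^{(i)}_l, where for n ∈ {i, i+1} the sequence (p^{(n)}_l) is defined by p^{(n)}_0 := 1 and p^{(n)}_l := exp(−α^{(n)}·δ^{(n)}(1−p^{(n)}_{l−1})) for l ≥ 1. -/
/-- Lemma 4, part (2): the LT iterative-decoding error probability is
decreasing in the number of time frames, i.e. `p⁽ⁱ⁺¹⁾_l ≤ p⁽ⁱ⁾_l` for every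
iteration index `l`. -/
theorem lt_error_sequence_decreasing_in_time_frames
    (K : ℕ) (hK : 1 ≤ K) (i : ℕ) (hi : 1 ≤ i) (N k e : ℝ) (hN : 0 < N) (hk : 0 < k)
    (he0 : 0 ≤ e) (he1 : e < 1)
    (Ω : ℕ → ℕ → ℝ)
    (hΩ : ∀ j ∈ Finset.Icc 1 (i + 1), ∀ d ∈ Finset.Icc 1 K, 0 ≤ Ω j d)
    (Δ : ℕ → ℕ → ℝ)
    (hΔ : ∀ n ∈ ({i, i + 1} : Set ℕ), ∀ d : ℕ,
      Δ n d = (1 / (n : ℝ)) * ∑ j ∈ Finset.Icc 1 n, Ω j d)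
    (N' : ℕ → ℝ) (hN' : ∀ n ∈ ({i, i + 1} : Set ℕ), N' n = (n : ℝ) * N * (1 - e))
    (μ : ℕ → ℝ)
    (hμ : ∀ n ∈ ({i, i + 1} : Set ℕ), μ n = ∑ d ∈ Finset.Icc 1 K, (d : ℝ) * Δ n d)
    (hμpos : ∀ n ∈ ({i, i + 1} : Set ℕ), 0 < μ n)
    (α : ℕ → ℝ) (hα : ∀ n ∈ ({i, i + 1} : Set ℕ), α n = (N' n / k) * μ n)
    (δ : ℕ → ℝ → ℝ)
    (hδ : ∀ n ∈ ({i, i + 1} : Set ℕ), ∀ x : ℝ,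
      δ n x = (1 / μ n) * ∑ d ∈ Finset.Icc 1 K, (d : ℝ) * Δ n d * x ^ (d - 1))
    (p : ℕ → ℕ → ℝ)
    (hp0 : ∀ n ∈ ({i, i + 1} : Set ℕ), p n 0 = 1)
    (hp : ∀ n ∈ ({i, i + 1} : Set ℕ), ∀ l : ℕ,
      p n (l + 1) = Real.exp (-(α n * δ n (1 - p n l)))) :
    ∀ l : ℕ, p (i + 1) l ≤ p i l := by
  have hmi : i ∈ ({i, i + 1} : Set ℕ) := Set.mem_insert _ _
  have hmi1 : i + 1 ∈ ({i, i + 1} : Set ℕ) := Set.mem_insert_of_mem _ rfl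
  set C : ℝ := N * (1 - e) / k with hCdef
  have hC : 0 ≤ C := by
    apply div_nonneg _ hk.le
    exact mul_nonneg hN.le (by linarith)
  -- key formula
  have key : ∀ n ∈ ({i, i + 1} : Set ℕ), ∀ x : ℝ,
      α n * δ n x = C * ∑ d ∈ Finset.Icc 1 K,
        (d : ℝ) * (∑ j ∈ Finset.Icc 1 n, Ω j d) * x ^ (d - 1) := by
    intro n hn x
    have hn0 : (n : ℝ) ≠ 0 := by
      rcases hn with h | h <;> subst h <;> positivity
    have hμn : μ n ≠ 0 := (hμpos n hn).ne'
    rw [hα n hn, hδ n hn, hN' n hn]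
    have hsum : ∑ d ∈ Finset.Icc 1 K, (d : ℝ) * Δ n d * x ^ (d - 1)
        = (1 / (n : ℝ)) * ∑ d ∈ Finset.Icc 1 K,
            (d : ℝ) * (∑ j ∈ Finset.Icc 1 n, Ω j d) * x ^ (d - 1) := by
      rw [Finset.mul_sum]
      apply Finset.sum_congr rfl
      intro d _
      rw [hΔ n hn d]; ring
    rw [hsum, hCdef]
    have e1 : μ n * (1 / μ n) = 1 := by field_simp
    have e2 : (n : ℝ) * (1 / (n : ℝ)) = 1 := by field_simp
    have hrw : ∀ S : ℝ, (↑n * N * (1 - e) / k) * μ n * (1 / μ n * (1 / (n : ℝ) * S))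
        = (N * (1 - e) / k) * S * (μ n * (1 / μ n)) * ((n : ℝ) * (1 / (n : ℝ))) := by
      intro S; ring
    rw [hrw, e1, e2, mul_one, mul_one]
  -- nonneg sums
  have hΩ' : ∀ n ∈ ({i, i + 1} : Set ℕ), ∀ d ∈ Finset.Icc 1 K, ∀ j ∈ Finset.Icc 1 n,
      0 ≤ Ω j d := by
    intro n hn d hd j hj
    apply hΩ j _ d hd
    rcases hn with h | h <;> subst h
    · exact Finset.Icc_subset_Icc_right (by omega) hj
    · exact hj
  have gnonneg : ∀ n ∈ ({i, i + 1} : Set ℕ), ∀ x : ℝ, 0 ≤ x →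
      0 ≤ ∑ d ∈ Finset.Icc 1 K, (d : ℝ) * (∑ j ∈ Finset.Icc 1 n, Ω j d) * x ^ (d - 1) := by
    intro n hn x hx
    apply Finset.sum_nonneg
    intro d hd
    have h1 : 0 ≤ ∑ j ∈ Finset.Icc 1 n, Ω j d :=
      Finset.sum_nonneg fun j hj => hΩ' n hn d hd j hj
    positivity
  -- bounds of p
  have hpbd : ∀ n ∈ ({i, i + 1} : Set ℕ), ∀ l : ℕ, 0 ≤ p n l ∧ p n l ≤ 1 := by
    intro n hn l
    induction l with
    | zero => rw [hp0 n hn]; norm_num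
    | succ l ih =>
      rw [hp n hn l, key n hn]
      constructor
      · exact (Real.exp_pos _).le
      · apply Real.exp_le_one_iff.mpr
        have := gnonneg n hn (1 - p n l) (by linarith [ih.2])
        nlinarith
  -- main induction
  intro l
  induction l with
  | zero => rw [hp0 i hmi, hp0 (i + 1) hmi1]
  | succ l ih =>
    rw [hp i hmi l, hp (i + 1) hmi1 l, key i hmi, key (i + 1) hmi1]
    apply Real.exp_le_exp.mpr
    have hx1 : (0:ℝ) ≤ 1 - p (i + 1) l := by linarith [(hpbd (i + 1) hmi1 l).2]
    have hx2 : 1 - p i l ≤ 1 - p (i + 1) l := by linarith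
    have hx2' : (0:ℝ) ≤ 1 - p i l := by linarith [(hpbd i hmi l).2]
    have step1 : ∑ d ∈ Finset.Icc 1 K, (d : ℝ) * (∑ j ∈ Finset.Icc 1 i, Ω j d)
          * (1 - p i l) ^ (d - 1)
        ≤ ∑ d ∈ Finset.Icc 1 K, (d : ℝ) * (∑ j ∈ Finset.Icc 1 i, Ω j d)
          * (1 - p (i + 1) l) ^ (d - 1) := by
      apply Finset.sum_le_sum
      intro d hd
      have h1 : 0 ≤ ∑ j ∈ Finset.Icc 1 i, Ω j d :=
        Finset.sum_nonneg fun j hj => hΩ' i hmi d hd j hj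
      have h2 : (1 - p i l) ^ (d - 1) ≤ (1 - p (i + 1) l) ^ (d - 1) :=
        pow_le_pow_left₀ hx2' hx2 _
      have hd0 : (0:ℝ) ≤ d := Nat.cast_nonneg d
      exact mul_le_mul_of_nonneg_left h2 (mul_nonneg hd0 h1)
    have step2 : ∑ d ∈ Finset.Icc 1 K, (d : ℝ) * (∑ j ∈ Finset.Icc 1 i, Ω j d)
          * (1 - p (i + 1) l) ^ (d - 1)
        ≤ ∑ d ∈ Finset.Icc 1 K, (d : ℝ) * (∑ j ∈ Finset.Icc 1 (i + 1), Ω j d)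
          * (1 - p (i + 1) l) ^ (d - 1) := by
      apply Finset.sum_le_sum
      intro d hd
      have h1 : ∑ j ∈ Finset.Icc 1 i, Ω j d ≤ ∑ j ∈ Finset.Icc 1 (i + 1), Ω j d := by
        apply Finset.sum_le_sum_of_subset_of_nonneg
          (Finset.Icc_subset_Icc_right (by omega))
        intro j hj _
        exact hΩ' (i + 1) hmi1 d hd j hj
      have hd0 : (0:ℝ) ≤ d := Nat.cast_nonneg d
      have hpw : (0:ℝ) ≤ (1 - p (i + 1) l) ^ (d - 1) := pow_nonneg hx1 _
      exact mul_le_mul_of_nonneg_right (mul_le_mul_of_nonneg_left h1 hd0) hpw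
    nlinarith [step1, step2]
end

section
/- Arithmetic core of the FCC throughput upper bound of Lemma 6 (case e₁ ≤ e ≤ e₂): let 0 ≤ e₁ ≤ e ≤ e₂ ≤ 1 with e < 1, let N, k > 0 be reals, and let N₂, T be reals satisfying N₂ ≥ k/(N(1−e)) and T ≥ N₂ + (k − N₂·N(1−e₂))/(N(2−e₁−e₂)). Then T > 0 and k/(N·T) ≤ (1−e)(2−e₁−e₂)/(2−e₁−e). -/
/-- Arithmetic core of the FCC throughput upper bound of Lemma 6 in the case
`e₁ ≤ e ≤ e₂`: the total number of time frames `T` is positive and the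
throughput `k/(N·T)` is at most `(1-e)(2-e₁-e₂)/(2-e₁-e)`. -/
theorem fcc_throughput_bound_middle_case
    (e₁ e₂ e N k N₂ T : ℝ)
    (he₁0 : 0 ≤ e₁) (h₁e : e₁ ≤ e) (hee₂ : e ≤ e₂) (he₂1 : e₂ ≤ 1) (he1 : e < 1)
    (hN : 0 < N) (hk : 0 < k)
    (hN₂ : N₂ ≥ k / (N * (1 - e)))
    (hT : T ≥ N₂ + (k - N₂ * N * (1 - e₂)) / (N * (2 - e₁ - e₂))) :
    0 < T ∧ k / (N * T) ≤ (1 - e) * (2 - e₁ - e₂) / (2 - e₁ - e) := by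
  have hA : (0:ℝ) < 1 - e := by linarith
  have hB : (0:ℝ) < 2 - e₁ - e₂ := by linarith
  have hC : (0:ℝ) < 2 - e₁ - e := by linarith
  have hNA : 0 < N * (1 - e) := by positivity
  have hNB : 0 < N * (2 - e₁ - e₂) := by positivity
  have h1 : k ≤ N₂ * (N * (1 - e)) := (div_le_iff₀ hNA).mp hN₂
  have h2 : N₂ * (N * (2 - e₁ - e₂)) + (k - N₂ * N * (1 - e₂)) ≤ T * (N * (2 - e₁ - e₂)) := by
    have h := (div_le_iff₀ hNB).mp
      (by linarith : (k - N₂ * N * (1 - e₂)) / (N * (2 - e₁ - e₂)) ≤ T - N₂)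
    nlinarith
  have hN₂pos : 0 < N₂ := by nlinarith
  have h3 : k * (2 - e₁ - e) ≤ T * N * ((1 - e) * (2 - e₁ - e₂)) := by
    nlinarith [mul_le_mul_of_nonneg_right h2 hA.le,
      mul_le_mul_of_nonneg_right h1 (by linarith : (0:ℝ) ≤ 1 - e₁)]
  have hT0 : 0 < T := by
    by_contra h
    push_neg at h
    nlinarith [mul_pos hk hC,
      mul_nonneg (mul_nonneg (neg_nonneg.mpr h) hN.le) (mul_pos hA hB).le]
  refine ⟨hT0, ?_⟩
  rw [div_le_div_iff₀ (by positivity) hC]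
  nlinarith
end
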